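/- If κ_a > κ_e > 0 and τ > 0, with α = e^{-κ_a τ}, β = e^{-κ_e τ}, then κ_a (1 - β) > κ_e (1 - α). -/

import Mathlib

open Real

lemma key_aux (x y : ℝ) (hx : 0 < x) (hxy : x < y) :
    y * (1 - Real.exp (-x)) > x * (1 - Real.exp (-y)) := by
  set f : ℝ → ℝ := fun t => t * (1 - Real.exp (-x)) - x * (1 - Real.exp (-t)) with hf
  have hderiv : ∀ t : ℝ, HasDerivAt f ((1 - Real.exp (-x)) - x * Real.exp (-t)) t := by
    intro t
    have h1 : HasDerivAt (fun t : ℝ => t * (1 - Real.exp (-x))) (1 - Real.exp (-x)) t := by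
      simpa using (hasDerivAt_id t).mul_const (1 - Real.exp (-x))
    have h2 : HasDerivAt (fun t : ℝ => Real.exp (-t)) (-Real.exp (-t)) t := by
      simpa [Function.comp_def] using (Real.hasDerivAt_exp (-t)).comp t ((hasDerivAt_id t).neg)
    have h3 : HasDerivAt (fun t : ℝ => x * (1 - Real.exp (-t))) (x * Real.exp (-t)) t := by
      have := ((hasDerivAt_const t (1 : ℝ)).sub h2).const_mul x
      simpa using this
    exact h1.sub h3
  have hmono : StrictMonoOn f (Set.Ici x) := by
    apply strictMonoOn_of_deriv_pos (convex_Ici x)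
    · exact (Continuous.continuousOn (by continuity))
    · intro t ht
      rw [interior_Ici] at ht
      rw [(hderiv t).deriv]
      have hexp : Real.exp (-t) < Real.exp (-x) := Real.exp_lt_exp.2 (by linarith [ht.out])
      have h4 : Real.exp (-x) * (1 + x) < 1 := by
        have := Real.add_one_lt_exp (x := x) (by positivity)
        calc Real.exp (-x) * (1 + x) < Real.exp (-x) * Real.exp x := by
              apply mul_lt_mul_of_pos_left (by linarith) (Real.exp_pos _)
          _ = 1 := by rw [← Real.exp_add]; simp
      have h5 : x * Real.exp (-t) < x * Real.exp (-x) := by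
        exact mul_lt_mul_of_pos_left hexp hx
      nlinarith [Real.exp_pos (-x), Real.exp_pos (-t)]
  have := hmono (Set.self_mem_Ici) (Set.mem_Ici.2 hxy.le) hxy
  have hfx : f x = 0 := by simp [hf]
  have : 0 < f y := by rw [← hfx]; exact this
  simp only [hf] at this
  linarith

theorem key_inequality (κa κe τ : ℝ) (h1 : κa > κe) (h2 : κe > 0) (hτ : 0 < τ) :
    κa * (1 - Real.exp (-κe * τ)) > κe * (1 - Real.exp (-κa * τ)) := by
  have hx : 0 < κe * τ := by positivity
  have hxy : κe * τ < κa * τ := by nlinarith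
  have h := key_aux (κe * τ) (κa * τ) hx hxy
  have e1 : -(κe * τ) = -κe * τ := by ring
  have e2 : -(κa * τ) = -κa * τ := by ring
  rw [e1, e2] at h
  nlinarith [Real.exp_pos (-κe * τ), Real.exp_pos (-κa * τ)]
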